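/- For every integer m ≥ 1 and every real t > 0, K_{m−1/2}(t) ≤ (√π/2)·(t/2)^{1/2−m}·e^{−t}·Γ((1+t)/2 + m − 1)/Γ((1+t)/2), where Γ denotes the Gamma function. -/

import Mathlib

open MeasureTheory Real Set

/-- The modified Bessel function of the second kind:
`K_ν(t) = ∫₀^∞ exp(−t·cosh(s))·cosh(νs) ds`. -/
noncomputable def besselK (ν t : ℝ) : ℝ :=
  ∫ s in Ioi (0 : ℝ), Real.exp (-(t * Real.cosh s)) * Real.cosh (ν * s)


lemma integrable_quad (b c : ℝ) (hb : 0 < b) :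
    Integrable fun x : ℝ => Real.exp (-b * x ^ 2 + c * x) := by
  have h := (integrable_cexp_quadratic (b := (b : ℂ)) (by simpa using hb) (c : ℂ) 0).norm
  refine h.congr (Filter.Eventually.of_forall fun x => ?_)
  simp only [Complex.norm_exp,
    show (-(b:ℂ) * (x:ℂ) ^ 2 + c * x + 0) = ((-b * x ^ 2 + c * x : ℝ) : ℂ) by push_cast; ring,
    Complex.ofReal_re]

lemma cosh_eq_one_add (s : ℝ) : Real.cosh s = 1 + 2 * Real.sinh (s / 2) ^ 2 := by
  have h := Real.cosh_two_mul (s / 2)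
  have h2 := Real.cosh_sq (s / 2)
  rw [show 2 * (s / 2) = s by ring] at h
  linarith

lemma one_add_sq_le_cosh (s : ℝ) : 1 + s ^ 2 / 2 ≤ Real.cosh s := by
  have h := cosh_eq_one_add s
  have h2 : |s| / 2 ≤ Real.sinh (|s| / 2) := Real.self_le_sinh_iff.mpr (by positivity)
  have h3 : Real.sinh (s / 2) ^ 2 = Real.sinh (|s| / 2) ^ 2 := by
    rw [← sq_abs, Real.abs_sinh, show |s / 2| = |s| / 2 by rw [abs_div, abs_two]]
  nlinarith [abs_nonneg s, sq_abs s]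

lemma cosh_le_exp_abs (x : ℝ) : Real.cosh x ≤ Real.exp |x| := by
  rw [Real.cosh_eq]
  have h1 : Real.exp x ≤ Real.exp |x| := Real.exp_le_exp.mpr (le_abs_self x)
  have h2 : Real.exp (-x) ≤ Real.exp |x| := Real.exp_le_exp.mpr (neg_le_abs x)
  linarith

lemma abs_sinh_le_cosh (x : ℝ) : |Real.sinh x| ≤ Real.cosh x := by
  have h := Real.sinh_sq x
  nlinarith [Real.cosh_pos x, abs_nonneg (Real.sinh x), sq_abs (Real.sinh x)]

lemma integrableOn_exp_cosh_mul {t c : ℝ} (ht : 0 < t) {g : ℝ → ℝ} (hg : Continuous g)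
    (hbound : ∀ s, 0 ≤ s → |g s| ≤ Real.exp (c * s)) :
    IntegrableOn (fun s => Real.exp (-(t * Real.cosh s)) * g s) (Ioi 0) := by
  refine Integrable.mono' ((integrable_quad (t / 2) c (by positivity)).integrableOn)
    ((Continuous.mul (by continuity) hg).aestronglyMeasurable) ?_
  filter_upwards [ae_restrict_mem measurableSet_Ioi] with s hs
  have hs0 : (0 : ℝ) ≤ s := le_of_lt hs
  have h1 : Real.exp (-(t * Real.cosh s)) ≤ Real.exp (-(t / 2) * s ^ 2) := by
    apply Real.exp_le_exp.mpr
    nlinarith [one_add_sq_le_cosh s]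
  calc ‖Real.exp (-(t * Real.cosh s)) * g s‖
      = Real.exp (-(t * Real.cosh s)) * |g s| := by
        rw [norm_mul, Real.norm_eq_abs, Real.norm_eq_abs, abs_of_pos (Real.exp_pos _)]
    _ ≤ Real.exp (-(t / 2) * s ^ 2) * Real.exp (c * s) := by
        exact mul_le_mul h1 (hbound s hs0) (abs_nonneg _) (Real.exp_pos _).le
    _ = Real.exp (-(t / 2) * s ^ 2 + c * s) := by rw [← Real.exp_add]

lemma integrable_besselK {t : ℝ} (ν : ℝ) (ht : 0 < t) :
    IntegrableOn (fun s => Real.exp (-(t * Real.cosh s)) * Real.cosh (ν * s)) (Ioi 0) := by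
  refine integrableOn_exp_cosh_mul (c := |ν|) ht (by continuity) fun s hs => ?_
  rw [abs_of_pos (Real.cosh_pos _)]
  calc Real.cosh (ν * s) ≤ Real.exp |ν * s| := cosh_le_exp_abs _
    _ = Real.exp (|ν| * s) := by rw [abs_mul, abs_of_nonneg hs]

lemma integrable_besselK_sinh {t : ℝ} (ν : ℝ) (ht : 0 < t) :
    IntegrableOn (fun s => Real.exp (-(t * Real.cosh s)) * (Real.sinh (ν * s) * Real.sinh s))
      (Ioi 0) := by
  refine integrableOn_exp_cosh_mul (c := |ν| + 1) ht (by continuity) fun s hs => ?_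
  calc |Real.sinh (ν * s) * Real.sinh s| = |Real.sinh (ν * s)| * |Real.sinh s| := abs_mul _ _
    _ ≤ Real.cosh (ν * s) * Real.cosh s :=
        mul_le_mul (abs_sinh_le_cosh _) (abs_sinh_le_cosh _) (abs_nonneg _) (Real.cosh_pos _).le
    _ ≤ Real.exp (|ν| * s) * Real.exp s := by
        refine mul_le_mul ?_ ?_ (Real.cosh_pos _).le (Real.exp_pos _).le
        · calc Real.cosh (ν * s) ≤ Real.exp |ν * s| := cosh_le_exp_abs _
            _ = Real.exp (|ν| * s) := by rw [abs_mul, abs_of_nonneg hs]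
        · calc Real.cosh s ≤ Real.exp |s| := cosh_le_exp_abs _
            _ = Real.exp s := by rw [abs_of_nonneg hs]
    _ = Real.exp ((|ν| + 1) * s) := by rw [← Real.exp_add]; ring_nf


-- ∫_{Ioi 0} exp(-(t cosh s)) * (2 sinh(νs) sinh s) = (2ν/t) * besselK ν t
lemma parts_eq (ν t : ℝ) (ht : 0 < t) :
    ∫ s in Ioi (0:ℝ), Real.exp (-(t * Real.cosh s)) * (Real.sinh (ν * s) * Real.sinh s)
      = (ν / t) * besselK ν t := by
  set F : ℝ → ℝ := fun s => -(1 / t) * (Real.sinh (ν * s) * Real.exp (-(t * Real.cosh s))) with hF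
  set F' : ℝ → ℝ := fun s =>
    Real.exp (-(t * Real.cosh s)) * (Real.sinh (ν * s) * Real.sinh s)
      - (ν / t) * (Real.exp (-(t * Real.cosh s)) * Real.cosh (ν * s)) with hF'
  have hderiv : ∀ x ∈ Ici (0:ℝ), HasDerivAt F (F' x) x := by
    intro x _
    have h1 : HasDerivAt (fun s : ℝ => Real.sinh (ν * s)) (ν * Real.cosh (ν * x)) x := by
      simpa [mul_comm, Function.comp_def] using ((Real.hasDerivAt_sinh (ν * x)).comp x
        ((hasDerivAt_id x).const_mul ν))
    have h2 : HasDerivAt (fun s : ℝ => Real.exp (-(t * Real.cosh s)))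
        (Real.exp (-(t * Real.cosh x)) * (-(t * Real.sinh x))) x := by
      have h3 : HasDerivAt (fun s : ℝ => -(t * Real.cosh s)) (-(t * Real.sinh x)) x := by
        simpa [Pi.neg_def] using ((Real.hasDerivAt_cosh x).const_mul t).neg
      simpa [mul_comm, Function.comp_def] using (Real.hasDerivAt_exp (-(t * Real.cosh x))).comp x h3
    have := ((h1.mul h2).const_mul (-(1 / t)))
    refine this.congr_deriv ?_
    rw [hF']
    field_simp
    ring
  have hint : IntegrableOn F' (Ioi 0) :=
    (integrable_besselK_sinh ν ht).sub ((integrable_besselK ν ht).const_mul _)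
  have htend : Filter.Tendsto F Filter.atTop (nhds 0) := by
    apply squeeze_zero_norm' (a := fun s => (1 / t) * Real.exp (|ν| * s + -(t * (1 + s ^ 2 / 2))))
    · filter_upwards [Filter.eventually_ge_atTop (0:ℝ)] with s hs
      have hb : |Real.sinh (ν * s)| * Real.exp (-(t * Real.cosh s))
          ≤ Real.exp (|ν| * s) * Real.exp (-(t * (1 + s ^ 2 / 2))) := by
        refine mul_le_mul ?_ ?_ (Real.exp_pos _).le (Real.exp_pos _).le
        · calc |Real.sinh (ν * s)| ≤ Real.cosh (ν * s) := abs_sinh_le_cosh _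
            _ ≤ Real.exp |ν * s| := cosh_le_exp_abs _
            _ = Real.exp (|ν| * s) := by rw [abs_mul, abs_of_nonneg hs]
        · exact Real.exp_le_exp.mpr (by nlinarith [one_add_sq_le_cosh s])
      calc ‖F s‖ = (1 / t) * (|Real.sinh (ν * s)| * Real.exp (-(t * Real.cosh s))) := by
            rw [hF]
            rw [norm_eq_abs, abs_mul, abs_mul, abs_of_pos (Real.exp_pos _), abs_neg,
              abs_of_pos (by positivity : (0:ℝ) < 1 / t)]
        _ ≤ (1 / t) * (Real.exp (|ν| * s) * Real.exp (-(t * (1 + s ^ 2 / 2)))) := by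
            exact mul_le_mul_of_nonneg_left hb (by positivity)
        _ = (1 / t) * Real.exp (|ν| * s + -(t * (1 + s ^ 2 / 2))) := by rw [← Real.exp_add]
    · rw [show (0:ℝ) = (1 / t) * 0 by ring]
      apply Filter.Tendsto.const_mul
      apply Real.tendsto_exp_atBot.comp
      have h1 : Filter.Tendsto (fun s : ℝ => s * (|ν| - t * s / 2)) Filter.atTop Filter.atBot := by
        apply Filter.Tendsto.atTop_mul_atBot₀ Filter.tendsto_id
        apply Filter.tendsto_atBot_add_const_left
        have h2 : Filter.Tendsto (fun s : ℝ => (t / 2) * s) Filter.atTop Filter.atTop :=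
          Filter.Tendsto.const_mul_atTop (by positivity) Filter.tendsto_id
        have h3 := Filter.tendsto_neg_atTop_atBot.comp h2
        exact h3.congr (fun s => by show -(t / 2 * s) = _; ring)
      exact ((Filter.tendsto_atBot_add_const_right _ (-t) h1).congr (fun s => by ring))
  have key := integral_Ioi_of_hasDerivAt_of_tendsto' hderiv hint htend
  have hF0 : F 0 = 0 := by simp [hF]
  rw [hF0, sub_zero] at key
  rw [hF'] at key
  rw [besselK]
  have h2 : ∫ s in Ioi (0:ℝ), ((fun s => Real.exp (-(t * Real.cosh s)) * (Real.sinh (ν * s) * Real.sinh s)) s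
      - (ν / t) * (Real.exp (-(t * Real.cosh s)) * Real.cosh (ν * s))) = 0 := key
  rw [integral_sub (integrable_besselK_sinh ν ht)
    ((integrable_besselK ν ht).const_mul (ν / t))] at h2
  rw [MeasureTheory.integral_const_mul] at h2
  linarith


lemma besselK_rec (ν t : ℝ) (ht : 0 < t) :
    besselK (ν + 1) t = besselK (ν - 1) t + (2 * ν / t) * besselK ν t := by
  have hsub : besselK (ν + 1) t - besselK (ν - 1) t
      = ∫ s in Ioi (0:ℝ), (Real.exp (-(t * Real.cosh s)) * Real.cosh ((ν + 1) * s)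
          - Real.exp (-(t * Real.cosh s)) * Real.cosh ((ν - 1) * s)) := by
    rw [besselK, besselK, integral_sub (integrable_besselK _ ht) (integrable_besselK _ ht)]
  have heq : ∀ s : ℝ, Real.exp (-(t * Real.cosh s)) * Real.cosh ((ν + 1) * s)
      - Real.exp (-(t * Real.cosh s)) * Real.cosh ((ν - 1) * s)
      = 2 * (Real.exp (-(t * Real.cosh s)) * (Real.sinh (ν * s) * Real.sinh s)) := by
    intro s
    rw [show (ν + 1) * s = ν * s + s by ring, show (ν - 1) * s = ν * s - s by ring,
      Real.cosh_add, Real.cosh_sub]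
    ring
  have h2 : (∫ s in Ioi (0:ℝ), (Real.exp (-(t * Real.cosh s)) * Real.cosh ((ν + 1) * s)
      - Real.exp (-(t * Real.cosh s)) * Real.cosh ((ν - 1) * s)))
      = 2 * ((ν / t) * besselK ν t) := by
    simp_rw [heq]
    rw [MeasureTheory.integral_const_mul, parts_eq ν t ht]
  rw [show 2 * ν / t * besselK ν t = 2 * ((ν / t) * besselK ν t) by ring]
  linarith

lemma besselK_mono {t : ℝ} (ht : 0 < t) {a b : ℝ} (hab : |a| ≤ |b|) :
    besselK a t ≤ besselK b t := by
  refine setIntegral_mono_on (integrable_besselK a ht) (integrable_besselK b ht)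
    measurableSet_Ioi fun s hs => ?_
  refine mul_le_mul_of_nonneg_left (Real.cosh_le_cosh.mpr ?_) (Real.exp_pos _).le
  rw [abs_mul, abs_mul]
  exact mul_le_mul_of_nonneg_right hab (abs_nonneg s)

lemma besselK_half (t : ℝ) (ht : 0 < t) :
    besselK (1 / 2) t = Real.exp (-t) * Real.sqrt (Real.pi / (2 * t)) := by
  set f : ℝ → ℝ := fun s => Real.sinh (s / 2) with hf
  set f' : ℝ → ℝ := fun s => Real.cosh (s / 2) * (1 / 2) with hf'
  set g : ℝ → ℝ := fun u => 2 * (Real.exp (-t) * Real.exp (-(2 * t) * u ^ 2)) with hg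
  have hderiv : ∀ x ∈ Ioi (0:ℝ), HasDerivWithinAt f (f' x) (Ioi 0) x := by
    intro x _
    exact ((Real.hasDerivAt_sinh (x / 2)).comp x
      ((hasDerivAt_id x).div_const 2)).hasDerivWithinAt
  have hinj : InjOn f (Ioi 0) := fun a _ b _ h => by
    have := Real.sinh_injective h; linarith
  have himg : f '' (Ioi 0) = Ioi 0 := by
    ext u
    constructor
    · rintro ⟨s, hs, rfl⟩
      exact Real.sinh_pos_iff.mpr (by simpa using half_pos (show (0:ℝ) < s from hs))
    · intro hu
      exact ⟨2 * Real.arsinh u, by simpa using Real.arsinh_pos_iff.mpr hu,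
        by simp [hf, Real.sinh_arsinh]⟩
  have hchg := integral_image_eq_integral_abs_deriv_smul measurableSet_Ioi hderiv hinj g
  rw [himg] at hchg
  have hL : ∫ u in Ioi (0:ℝ), g u = Real.exp (-t) * Real.sqrt (Real.pi / (2 * t)) := by
    rw [hg]
    simp_rw [MeasureTheory.integral_const_mul]
    rw [integral_gaussian_Ioi (2 * t)]
    ring
  have hR : ∫ x in Ioi (0:ℝ), |f' x| • g (f x) = besselK (1 / 2) t := by
    rw [besselK]
    refine setIntegral_congr_fun measurableSet_Ioi fun s _ => ?_
    rw [smul_eq_mul, abs_of_pos (by positivity : (0:ℝ) < f' s)]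
    simp only [hf, hf', hg]
    beta_reduce
    rw [show -(2 * t) * Real.sinh (s / 2) ^ 2 = -(t * (1 + 2 * Real.sinh (s / 2) ^ 2)) - (-t)
      by ring, ← cosh_eq_one_add s, Real.exp_sub, show (1:ℝ) / 2 * s = s / 2 by ring]
    field_simp [Real.exp_ne_zero]
  rw [← hR, ← hchg, hL]

/-- for every integer `m ≥ 1` and every real `t > 0`,
`K_{m−1/2}(t) ≤ (√π/2)·(t/2)^{1/2−m}·e^{−t}·Γ((1+t)/2 + m − 1)/Γ((1+t)/2)`. -/
theorem stmt_10 :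
    ∀ m : ℕ, 1 ≤ m → ∀ t : ℝ, 0 < t →
      besselK ((m : ℝ) - 1 / 2) t ≤
        (Real.sqrt Real.pi / 2) * (t / 2) ^ ((1 : ℝ) / 2 - (m : ℝ)) * Real.exp (-t) *
          Real.Gamma ((1 + t) / 2 + m - 1) / Real.Gamma ((1 + t) / 2) := by
  intro m hm
  induction m, hm using Nat.le_induction with
  | base =>
    intro t ht
    have hG : 0 < Real.Gamma ((1 + t) / 2) := Real.Gamma_pos_of_pos (by linarith)
    rw [show ((1:ℕ):ℝ) - 1 / 2 = 1 / 2 by norm_num, besselK_half t ht,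
        show (1 + t) / 2 + ((1:ℕ):ℝ) - 1 = (1 + t) / 2 by push_cast; ring]
    rw [mul_div_assoc, div_self hG.ne', mul_one]
    apply le_of_eq
    have h2 : Real.sqrt 2 * Real.sqrt 2 = 2 := Real.mul_self_sqrt (by norm_num)
    have hst : 0 < Real.sqrt t := Real.sqrt_pos.mpr ht
    have hs2 : 0 < Real.sqrt 2 := Real.sqrt_pos.mpr (by norm_num)
    rw [show ((1:ℝ)/2 - ((1:ℕ):ℝ)) = -(1/2) by push_cast; ring,
        Real.rpow_neg (by positivity), ← Real.sqrt_eq_rpow]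
    have e1 : Real.sqrt (Real.pi / (2 * t)) = Real.sqrt Real.pi / (Real.sqrt 2 * Real.sqrt t) := by
      rw [Real.sqrt_div pi_pos.le, Real.sqrt_mul (by norm_num : (0:ℝ) ≤ 2) t]
    have e2 : Real.sqrt (t / 2) = Real.sqrt t / Real.sqrt 2 := Real.sqrt_div ht.le 2
    rw [e1, e2]
    field_simp
    linear_combination (-1 : ℝ) * h2
  | succ m hm ih =>
    intro t ht
    have ih := ih t ht
    have hG : 0 < Real.Gamma ((1 + t) / 2) := Real.Gamma_pos_of_pos (by linarith)
    have hGm : 0 < (1 + t) / 2 + (m:ℝ) - 1 := by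
      have : (1:ℝ) ≤ (m:ℝ) := by exact_mod_cast hm
      linarith
    set ν : ℝ := (m : ℝ) - 1 / 2 with hν
    have hν1 : (1:ℝ) ≤ 2 * ν := by
      have : (1:ℝ) ≤ (m:ℝ) := by exact_mod_cast hm
      simp only [hν]; linarith
    have hcast : ((m + 1 : ℕ) : ℝ) - 1 / 2 = ν + 1 := by push_cast; simp only [hν]; ring
    rw [hcast, besselK_rec ν t ht]
    have hmono : besselK (ν - 1) t ≤ besselK ν t := by
      refine besselK_mono ht ?_
      rw [abs_of_nonneg (by linarith : (0:ℝ) ≤ ν)]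
      refine abs_le.mpr ⟨by linarith, by linarith⟩
    have hfac : (0:ℝ) ≤ 2 * ν / t := by positivity
    have step1 : besselK (ν - 1) t + 2 * ν / t * besselK ν t
        ≤ (1 + 2 * ν / t) * besselK ν t := by nlinarith
    refine step1.trans ?_
    have step2 : (1 + 2 * ν / t) * besselK ν t
        ≤ (1 + 2 * ν / t) * ((Real.sqrt Real.pi / 2) * (t / 2) ^ ((1 : ℝ) / 2 - (m : ℝ)) *
            Real.exp (-t) * Real.Gamma ((1 + t) / 2 + m - 1) / Real.Gamma ((1 + t) / 2)) :=
      mul_le_mul_of_nonneg_left ih (by positivity)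
    refine step2.trans (le_of_eq ?_)
    have hGadd : Real.Gamma ((1 + t) / 2 + ((m:ℝ) + 1) - 1)
        = ((1 + t) / 2 + (m:ℝ) - 1) * Real.Gamma ((1 + t) / 2 + (m:ℝ) - 1) := by
      rw [show (1 + t) / 2 + ((m:ℝ) + 1) - 1 = ((1 + t) / 2 + (m:ℝ) - 1) + 1 by ring,
        Real.Gamma_add_one hGm.ne']
    have hpow : (t / 2) ^ ((1 : ℝ) / 2 - ((m:ℝ) + 1))
        = (t / 2) ^ ((1 : ℝ) / 2 - (m:ℝ)) * (t / 2)⁻¹ := by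
      rw [show (1:ℝ) / 2 - ((m:ℝ) + 1) = ((1:ℝ) / 2 - (m:ℝ)) + (-1) by ring,
        Real.rpow_add (by positivity), Real.rpow_neg_one]
    push_cast
    rw [hGadd, hpow]
    have hp : (0:ℝ) ≤ (t / 2) ^ ((1 : ℝ) / 2 - (m:ℝ)) := by positivity
    field_simp
    simp only [hν]
    ring_nf
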